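/- Define the (p,q)-deformed 3-bracket of the generators by [L_m, L_n, L_k] = p^m q^{m−(n+k)} L_m ∘ [L_n, L_k]_{(q^n p^{−k}, q^k p^{−n})} + p^n q^{n−(k+m)} L_n ∘ [L_k, L_m]_{(q^k p^{−m}, q^m p^{−k})} + p^k q^{k−(m+n)} L_k ∘ [L_m, L_n]_{(q^m p^{−n}, q^n p^{−m})}, where [A,B]_{(u,v)} = u·A∘B − v·B∘A. Then for all integers m, n, k one has the closed form [L_m, L_n, L_k] = −(p q^{−1})^{m+n+k}/(q − p^{−1})² · det D · L_{m+n+k} as endomorphisms of V, where D is the 3×3 matrix whose columns are indexed by i ∈ {m, n, k} with column entries (p^{−2i}, p^{−i} q^{i}, q^{2i}). -/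

import Mathlib

/-- The deformed commutator `[A,B]_{(u,v)} = u·A∘B − v·B∘A` of endomorphisms. -/
noncomputable def defComm {K : Type*} [Field K] (u v : K)
    (A B : (ℤ →₀ K) →ₗ[K] (ℤ →₀ K)) : (ℤ →₀ K) →ₗ[K] (ℤ →₀ K) :=
  u • (A ∘ₗ B) - v • (B ∘ₗ A)

set_option maxHeartbeats 16000000 in
/-- The `(p,q)`-deformed 3-bracket
`[L_m, L_n, L_k] = p^m q^{m−(n+k)} L_m ∘ [L_n,L_k] + p^n q^{n−(k+m)} L_n ∘ [L_k,L_m]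
+ p^k q^{k−(m+n)} L_k ∘ [L_m,L_n]` has the closed form
`−(p q⁻¹)^{m+n+k}/(q−p⁻¹)² · det D · L_{m+n+k}`, where the columns of `D` are
`(p^{−2i}, p^{−i} q^{i}, q^{2i})` for `i ∈ {m,n,k}`. -/
theorem pq_three_bracket_closed_form
    {K : Type*} [Field K] (p q : K) (hp : p ≠ 0) (hq : q ≠ 0)
    (hpq : q - p⁻¹ ≠ 0)
    (L : ℤ → ((ℤ →₀ K) →ₗ[K] (ℤ →₀ K)))
    (hL : ∀ m k : ℤ, L m (Finsupp.single k 1) =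
      (-(p ^ (m + k) * ((q ^ k - p ^ (-k)) / (q - p⁻¹)))) • Finsupp.single (m + k) (1 : K))
    (m n k : ℤ) :
    (p ^ m * q ^ (m - (n + k))) •
        (L m ∘ₗ defComm (q ^ n * p ^ (-k)) (q ^ k * p ^ (-n)) (L n) (L k)) +
      (p ^ n * q ^ (n - (k + m))) •
        (L n ∘ₗ defComm (q ^ k * p ^ (-m)) (q ^ m * p ^ (-k)) (L k) (L m)) +
      (p ^ k * q ^ (k - (m + n))) •
        (L k ∘ₗ defComm (q ^ m * p ^ (-n)) (q ^ n * p ^ (-m)) (L m) (L n)) =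
      ((-((p * q⁻¹) ^ (m + n + k)) / (q - p⁻¹) ^ 2) *
        Matrix.det !![p ^ (-(2 * m)), p ^ (-(2 * n)), p ^ (-(2 * k));
                      p ^ (-m) * q ^ m, p ^ (-n) * q ^ n, p ^ (-k) * q ^ k;
                      q ^ (2 * m), q ^ (2 * n), q ^ (2 * k)]) • L (m + n + k) := by
  refine Finsupp.lhom_ext' fun j => LinearMap.ext_ring ?_
  simp only [LinearMap.comp_apply, Finsupp.lsingle_apply, LinearMap.add_apply,
    LinearMap.smul_apply, LinearMap.sub_apply, defComm, hL, map_smul, map_sub,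
    smul_smul, smul_sub]
  have e1 : m + (n + (k + j)) = m + n + k + j := by ring
  have e2 : m + (k + (n + j)) = m + n + k + j := by ring
  have e3 : n + (k + (m + j)) = m + n + k + j := by ring
  have e4 : n + (m + (k + j)) = m + n + k + j := by ring
  have e5 : k + (m + (n + j)) = m + n + k + j := by ring
  have e6 : k + (n + (m + j)) = m + n + k + j := by ring
  rw [e1, e2, e3, e4, e5, e6]
  simp only [Finsupp.smul_single, mul_one, ← Finsupp.single_add, ← Finsupp.single_sub]
  congr 1
  simp only [Matrix.det_fin_three, Matrix.of_apply, Matrix.cons_val', Matrix.cons_val_zero,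
    Matrix.cons_val_one, Matrix.head_cons, Matrix.head_fin_const, Matrix.empty_val',
    Matrix.cons_val_fin_one, Matrix.cons_val_two, Matrix.tail_cons, smul_eq_mul, mul_one]
  simp only [show ∀ i : ℤ, -(2 * i) = -i + -i from fun i => by ring,
    show ∀ i : ℤ, 2 * i = i + i from fun i => by ring,
    zpow_add₀ hp, zpow_add₀ hq, zpow_sub₀ hq, zpow_neg, mul_zpow, inv_zpow]
  have hA : p ^ m ≠ 0 := zpow_ne_zero _ hp
  have hB : p ^ n ≠ 0 := zpow_ne_zero _ hp
  have hC : p ^ k ≠ 0 := zpow_ne_zero _ hp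
  have hD : p ^ j ≠ 0 := zpow_ne_zero _ hp
  have hX : q ^ m ≠ 0 := zpow_ne_zero _ hq
  have hY : q ^ n ≠ 0 := zpow_ne_zero _ hq
  have hZ : q ^ k ≠ 0 := zpow_ne_zero _ hq
  have hW : q ^ j ≠ 0 := zpow_ne_zero _ hq
  obtain ⟨r, hr⟩ : ∃ r, q - p⁻¹ = r := ⟨_, rfl⟩
  rw [hr] at hpq ⊢
  field_simp
  ring
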